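/- Let X be an infinite set of cardinality κ. Then every non-trivial cutset in 𝒫(X) contains an antichain (under inclusion) of cardinality 2^κ. -/

import Mathlib

open Cardinal Set

universe u

namespace CutsetAux

variable {X : Type u}

theorem nomax (κ : Cardinal.{u}) (hκ : Cardinal.aleph0 ≤ κ) (a : κ.ord.ToType) :
    ∃ b : κ.ord.ToType, a < b := by
  by_contra h
  push_neg at h
  have hι : #(κ.ord.ToType) = κ := by rw [Cardinal.mk_toType, Cardinal.card_ord]
  have hinj : Function.Injective (fun b : κ.ord.ToType =>
      if hb : b < a then some (⟨b, hb⟩ : Set.Iio a) else none) := by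
    intro b b' hbb'
    by_cases hb : b < a <;> by_cases hb' : b' < a <;> simp [hb, hb'] at hbb'
    · exact congrArg Subtype.val hbb'
    · rw [le_antisymm (h b) (not_lt.mp hb), le_antisymm (h b') (not_lt.mp hb')]
  have hle := mk_le_of_injective hinj
  have hlt : #(Option (Set.Iio a)) < κ := by
    rw [Cardinal.mk_option]
    exact Cardinal.add_lt_of_lt hκ (Cardinal.mk_Iio_ord_toType a)
      (lt_of_lt_of_le Cardinal.one_lt_aleph0 hκ)
  exact absurd hle (not_le.mpr (lt_of_lt_of_le hlt (le_of_eq hι.symm)))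

/-- Key lemma: for any "medium" set `R` (both `R` and its complement of size `κ`),
the cutset `C` contains a set `E` with both `E \ R` and `R \ E` of size `< κ`. -/
theorem exists_near (κ : Cardinal.{u}) (hκ : Cardinal.aleph0 ≤ κ)
    (C : Set (Set X))
    (hcut : ∀ M : Set (Set X), IsMaxChain (· ⊆ ·) M → (C ∩ M).Nonempty)
    (huniv : Set.univ ∉ C) (hempty : ∅ ∉ C)
    (R : Set X) (hR : #R = κ) (hRc : #(↥(Rᶜ)) = κ) :
    ∃ E ∈ C, #(↥(E \ R)) < κ ∧ #(↥(R \ E)) < κ := by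
  classical
  have hι : #(κ.ord.ToType) = κ := by rw [Cardinal.mk_toType, Cardinal.card_ord]
  have hιne : Nonempty (κ.ord.ToType) := by
    rw [Ordinal.toType_nonempty_iff_ne_zero]
    intro h0
    have hκ0 : κ = 0 := by simpa using congrArg Ordinal.card h0
    rw [hκ0] at hκ
    exact Cardinal.aleph0_ne_zero (le_zero_iff.mp hκ)
  obtain ⟨req⟩ : Nonempty (κ.ord.ToType ≃ ↥R) := Cardinal.eq.mp (hι.trans hR.symm)
  obtain ⟨ceq⟩ : Nonempty (κ.ord.ToType ≃ ↥(Rᶜ)) := Cardinal.eq.mp (hι.trans hRc.symm)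
  set ι := κ.ord.ToType
  -- the chain: final segments of `R` (reverse well-order), then `R ∪` initial segs of `Rᶜ`
  set D : ι → Set X := fun a => {x | ∃ h : x ∈ R, a ≤ req.symm ⟨x, h⟩} with hD
  set U : ι → Set X := fun b => R ∪ {x | ∃ h : x ∈ Rᶜ, ceq.symm ⟨x, h⟩ < b} with hU
  set M : Set (Set X) :=
    {S | S = ∅ ∨ S = Set.univ ∨ S = R ∨ (∃ a, S = D a) ∨ (∃ b, S = U b)} with hM
  have hDR : ∀ a, D a ⊆ R := by rintro a x ⟨h, -⟩; exact h
  have hRU : ∀ b, R ⊆ U b := fun b => Set.subset_union_left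
  have hDanti : ∀ {a a' : ι}, a ≤ a' → D a' ⊆ D a := by
    rintro a a' h x ⟨hx, hle⟩; exact ⟨hx, le_trans h hle⟩
  have hUmono : ∀ {b b' : ι}, b ≤ b' → U b ⊆ U b' := by
    rintro b b' h x (hx | ⟨hc, hlt⟩)
    · exact Or.inl hx
    · exact Or.inr ⟨hc, lt_of_lt_of_le hlt h⟩
  have hRM : R ∈ M := Or.inr (Or.inr (Or.inl rfl))
  have hDM : ∀ a, D a ∈ M := fun a => Or.inr (Or.inr (Or.inr (Or.inl ⟨a, rfl⟩)))
  have hUM : ∀ b, U b ∈ M := fun b => Or.inr (Or.inr (Or.inr (Or.inr ⟨b, rfl⟩)))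
  have hchain : IsChain (· ⊆ ·) M := by
    rintro S hS S' hS' hne
    rcases hS with rfl | rfl | rfl | ⟨a, rfl⟩ | ⟨b, rfl⟩ <;>
      rcases hS' with rfl | rfl | rfl | ⟨a', rfl⟩ | ⟨b', rfl⟩ <;>
      first
        | exact absurd rfl hne
        | exact Or.inl (Set.empty_subset _)
        | exact Or.inr (Set.empty_subset _)
        | exact Or.inl (Set.subset_univ _)
        | exact Or.inr (Set.subset_univ _)
        | exact Or.inr (hDR _)
        | exact Or.inl (hDR _)
        | exact Or.inl (hRU _)
        | exact Or.inr (hRU _)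
        | exact Or.inl ((hDR _).trans (hRU _))
        | exact Or.inr ((hDR _).trans (hRU _))
        | (rcases le_total a a' with h | h
           · exact Or.inr (hDanti h)
           · exact Or.inl (hDanti h))
        | (rcases le_total b b' with h | h
           · exact Or.inl (hUmono h)
           · exact Or.inr (hUmono h))
  have hmax : IsMaxChain (· ⊆ ·) M := by
    refine ⟨hchain, fun t ht hMt => ?_⟩
    refine Set.Subset.antisymm hMt fun T hTt => ?_
    by_contra hTM
    have hcomp : ∀ m ∈ M, T ⊆ m ∨ m ⊆ T := by
      intro m hm
      rcases eq_or_ne m T with rfl | hne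
      · exact Or.inl (subset_refl _)
      · exact (ht (hMt hm) hTt hne).symm
    rcases hcomp R hRM with hTR | hRT
    · -- T ⊆ R : compare with the D-part
      by_cases hB : ∀ a, T ⊆ D a
      · -- T = ∅
        apply hTM; left
        rw [Set.eq_empty_iff_forall_notMem]
        intro x hx
        obtain ⟨j₀⟩ := hιne
        obtain ⟨hxR, -⟩ := hB j₀ hx
        obtain ⟨b, hb⟩ := nomax κ hκ (req.symm ⟨x, hxR⟩)
        obtain ⟨h', hb'⟩ := hB b hx
        exact absurd hb (not_lt.mpr hb')
      · push_neg at hB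
        have hwf : WellFounded ((· < ·) : ι → ι → Prop) := wellFounded_lt
        set B : Set ι := {a | ¬ T ⊆ D a} with hBdef
        have hBne : B.Nonempty := hB
        set a₁ := hwf.min B hBne with ha₁def
        have ha₁B : ¬ T ⊆ D a₁ := hwf.min_mem B hBne
        have ha₁min : ∀ w, w < a₁ → T ⊆ D w := by
          intro w hw
          by_contra hwB
          exact hwf.not_lt_min B hwB hw
        obtain ⟨y, hyT, hyD⟩ := Set.not_subset.mp ha₁B
        have hyR : y ∈ R := hTR hyT
        have hz : req.symm ⟨y, hyR⟩ < a₁ := by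
          by_contra h
          exact hyD ⟨hyR, not_lt.mp h⟩
        have hDT : D a₁ ⊆ T := by
          rcases hcomp (D a₁) (hDM a₁) with h | h
          · exact absurd h ha₁B
          · exact h
        by_cases hsucc : ∃ b₂, b₂ < a₁ ∧ ∀ w, w < a₁ → w ≤ b₂
        · obtain ⟨b₂, hb₂lt, hb₂max⟩ := hsucc
          have hTD₂ : T ⊆ D b₂ := ha₁min b₂ hb₂lt
          by_cases hyb : (req b₂ : X) ∈ T
          · -- then T = D b₂
            apply hTM
            refine Or.inr (Or.inr (Or.inr (Or.inl ⟨b₂, Set.Subset.antisymm hTD₂ ?_⟩)))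
            rintro u ⟨huR, hule⟩
            rcases lt_or_eq_of_le hule with h' | h'
            · have ha₁le : a₁ ≤ req.symm ⟨u, huR⟩ :=
                not_lt.mp (fun hlt => absurd (hb₂max _ hlt) (not_le.mpr h'))
              exact hDT ⟨huR, ha₁le⟩
            · have hsub : (⟨u, huR⟩ : ↥R) = req b₂ := (Equiv.symm_apply_eq req).mp h'.symm
              have : u = (req b₂ : X) := congrArg Subtype.val hsub
              exact this ▸ hyb
          · -- then T = D a₁, contradiction with ha₁B
            apply ha₁B
            intro y' hy'
            obtain ⟨hy'R, hy'le⟩ := hTD₂ hy'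
            rcases lt_or_eq_of_le hy'le with h' | h'
            · have ha₁le : a₁ ≤ req.symm ⟨y', hy'R⟩ :=
                not_lt.mp (fun hlt => absurd (hb₂max _ hlt) (not_le.mpr h'))
              exact ⟨hy'R, ha₁le⟩
            · exfalso
              apply hyb
              have hsub : (⟨y', hy'R⟩ : ↥R) = req b₂ := (Equiv.symm_apply_eq req).mp h'.symm
              exact (congrArg Subtype.val hsub) ▸ hy'
        · push_neg at hsucc
          obtain ⟨w, hw1, hw2⟩ := hsucc _ hz
          obtain ⟨h', hble⟩ := ha₁min w hw1 hyT
          exact absurd hble (not_le.mpr hw2)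
    · -- R ⊆ T : compare with the U-part
      by_cases hB : ∀ b, U b ⊆ T
      · -- T = univ
        apply hTM
        refine Or.inr (Or.inl ?_)
        rw [Set.eq_univ_iff_forall]
        intro x
        by_cases hx : x ∈ R
        · exact hRT hx
        · obtain ⟨b, hb⟩ := nomax κ hκ (ceq.symm ⟨x, hx⟩)
          exact hB b (Or.inr ⟨hx, hb⟩)
      · push_neg at hB
        have hwf : WellFounded ((· < ·) : ι → ι → Prop) := wellFounded_lt
        set B : Set ι := {b | ¬ U b ⊆ T} with hBdef
        have hBne : B.Nonempty := hB
        set b₁ := hwf.min B hBne with hb₁def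
        have hb₁B : ¬ U b₁ ⊆ T := hwf.min_mem B hBne
        have hb₁min : ∀ w, w < b₁ → U w ⊆ T := by
          intro w hw
          by_contra hwB
          exact hwf.not_lt_min B hwB hw
        obtain ⟨x, hxU, hxT⟩ := Set.not_subset.mp hb₁B
        have hxRc : x ∈ Rᶜ := fun hxR => hxT (hRT hxR)
        have hz : ceq.symm ⟨x, hxRc⟩ < b₁ := by
          rcases hxU with hxR | ⟨h, hlt⟩
          · exact absurd (hRT hxR) hxT
          · exact hlt
        have hTU₁ : T ⊆ U b₁ := by
          rcases hcomp (U b₁) (hUM b₁) with h | h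
          · exact h
          · exact absurd h hb₁B
        by_cases hsucc : ∃ b₂, b₂ < b₁ ∧ ∀ w, w < b₁ → w ≤ b₂
        · obtain ⟨b₂, hb₂lt, hb₂max⟩ := hsucc
          have hU₂T : U b₂ ⊆ T := hb₁min b₂ hb₂lt
          by_cases hcb : (ceq b₂ : X) ∈ T
          · -- then U b₁ ⊆ T, contradiction
            apply hb₁B
            rintro u (huR | ⟨h, hlt⟩)
            · exact hRT huR
            · rcases lt_or_eq_of_le (hb₂max _ hlt) with h' | h'
              · exact hU₂T (Or.inr ⟨h, h'⟩)
              · have hsub : (⟨u, h⟩ : ↥(Rᶜ)) = ceq b₂ := (Equiv.symm_apply_eq ceq).mp h'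
                have : u = (ceq b₂ : X) := congrArg Subtype.val hsub
                exact this ▸ hcb
          · -- then T = U b₂
            apply hTM
            refine Or.inr (Or.inr (Or.inr (Or.inr ⟨b₂, Set.Subset.antisymm ?_ hU₂T⟩)))
            intro y hy
            rcases hTU₁ hy with hyR | ⟨h, hlt⟩
            · exact Or.inl hyR
            · rcases lt_or_eq_of_le (hb₂max _ hlt) with h' | h'
              · exact Or.inr ⟨h, h'⟩
              · exfalso
                apply hcb
                have hsub : (⟨y, h⟩ : ↥(Rᶜ)) = ceq b₂ := (Equiv.symm_apply_eq ceq).mp h'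
                exact (congrArg Subtype.val hsub) ▸ hy
        · push_neg at hsucc
          obtain ⟨w, hw1, hw2⟩ := hsucc _ hz
          exact hxT (hb₁min w hw1 (Or.inr ⟨hxRc, hw2⟩))
  obtain ⟨E, hEC, hEM⟩ := hcut M hmax
  have hzero : (0 : Cardinal.{u}) < κ := lt_of_lt_of_le Cardinal.aleph0_pos hκ
  rcases hEM with rfl | rfl | rfl | ⟨a, rfl⟩ | ⟨b, rfl⟩
  · exact absurd hEC hempty
  · exact absurd hEC huniv
  · refine ⟨E, hEC, ?_, ?_⟩ <;>
      · rw [Set.diff_self]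
        simpa using hzero
  · -- E = D a
    refine ⟨D a, hEC, ?_, ?_⟩
    · rw [Set.diff_eq_empty.mpr (hDR a)]
      simpa using hzero
    · have hmap : ∀ x : ↥(R \ D a), req.symm ⟨x.1, x.2.1⟩ < a := by
        intro x
        by_contra h
        exact x.2.2 ⟨x.2.1, not_lt.mp h⟩
      have hinj : Function.Injective
          (fun x : ↥(R \ D a) => (⟨req.symm ⟨x.1, x.2.1⟩, hmap x⟩ : Set.Iio a)) := by
        intro x y hxy
        have h1 : req.symm ⟨x.1, x.2.1⟩ = req.symm ⟨y.1, y.2.1⟩ := congrArg Subtype.val hxy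
        have h2 : (⟨x.1, x.2.1⟩ : ↥R) = ⟨y.1, y.2.1⟩ := req.symm.injective h1
        have h3 : (x : X) = (y : X) := congrArg (Subtype.val : ↥R → X) h2
        exact Subtype.ext h3
      exact lt_of_le_of_lt (mk_le_of_injective hinj) (Cardinal.mk_Iio_ord_toType a)
  · -- E = U b
    refine ⟨U b, hEC, ?_, ?_⟩
    · have hmap : ∀ x : ↥(U b \ R), ∃ hc : x.1 ∈ Rᶜ, ceq.symm ⟨x.1, hc⟩ < b := by
        intro x
        rcases x.2.1 with hxR | ⟨h, hlt⟩
        · exact absurd hxR x.2.2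
        · exact ⟨h, hlt⟩
      have hinj : Function.Injective
          (fun x : ↥(U b \ R) =>
            (⟨ceq.symm ⟨x.1, (hmap x).choose⟩, (hmap x).choose_spec⟩ : Set.Iio b)) := by
        intro x y hxy
        have h1 : ceq.symm ⟨x.1, (hmap x).choose⟩ = ceq.symm ⟨y.1, (hmap y).choose⟩ :=
          congrArg Subtype.val hxy
        have h2 : (⟨x.1, (hmap x).choose⟩ : ↥(Rᶜ)) = ⟨y.1, (hmap y).choose⟩ :=
          ceq.symm.injective h1
        have h3 : (x : X) = (y : X) := congrArg (Subtype.val : ↥(Rᶜ) → X) h2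
        exact Subtype.ext h3
      exact lt_of_le_of_lt (mk_le_of_injective hinj) (Cardinal.mk_Iio_ord_toType b)
    · rw [Set.diff_eq_empty.mpr (hRU b)]
      simpa using hzero

end CutsetAux

/-- Let X be an infinite set of cardinality κ. Then every non-trivial
cutset in 𝒫(X) contains an antichain (under inclusion) of cardinality 2^κ. -/
theorem cutset_contains_antichain_of_card_two_pow {X : Type u} (κ : Cardinal.{u})
    (hX : Cardinal.mk X = κ) (hκ : Cardinal.aleph0 ≤ κ)
    (C : Set (Set X))
    (hcut : ∀ M : Set (Set X), IsMaxChain (· ⊆ ·) M → (C ∩ M).Nonempty)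
    (huniv : Set.univ ∉ C) (hempty : ∅ ∉ C) :
    ∃ ℬ ⊆ C, IsAntichain (· ⊆ ·) ℬ ∧ Cardinal.mk ℬ = 2 ^ κ := by
  classical
  have hι : #(κ.ord.ToType) = κ := by rw [Cardinal.mk_toType, Cardinal.card_ord]
  have hιne : Nonempty (κ.ord.ToType) := by
    rw [Ordinal.toType_nonempty_iff_ne_zero]
    intro h0
    have hκ0 : κ = 0 := by simpa using congrArg Ordinal.card h0
    rw [hκ0] at hκ
    exact Cardinal.aleph0_ne_zero (le_zero_iff.mp hκ)
  set ι := κ.ord.ToType with hιdef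
  have hcardsum : #((ι × ι) ⊕ (ι × ι)) = κ := by
    simp only [Cardinal.mk_sum, Cardinal.mk_prod, Cardinal.lift_id, hι]
    rw [Cardinal.mul_eq_self hκ, Cardinal.add_eq_self hκ]
  obtain ⟨e⟩ : Nonempty (X ≃ ((ι × ι) ⊕ (ι × ι))) := Cardinal.eq.mp (hX.trans hcardsum.symm)
  set Rf : Set ι → Set X := fun f =>
    {x | Sum.elim (fun p : ι × ι => p.2 ∈ f) (fun p : ι × ι => p.2 ∉ f) (e x)} with hRf
  have hmeminl : ∀ (f : Set ι) (i j : ι), e.symm (Sum.inl (i, j)) ∈ Rf f ↔ j ∈ f := by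
    intro f i j
    simp [hRf, Set.mem_setOf_eq]
  have hmeminr : ∀ (f : Set ι) (i j : ι), e.symm (Sum.inr (i, j)) ∈ Rf f ↔ j ∉ f := by
    intro f i j
    simp [hRf, Set.mem_setOf_eq]
  have hinjl : ∀ j₀ : ι, Function.Injective (fun i : ι => e.symm (Sum.inl (i, j₀))) := by
    intro j₀ i i' h
    have := e.symm.injective h
    simpa using this
  have hinjr : ∀ j₀ : ι, Function.Injective (fun i : ι => e.symm (Sum.inr (i, j₀))) := by
    intro j₀ i i' h
    have := e.symm.injective h
    simpa using this
  have hκle : ∀ (S : Set X) (g : ι → X), Function.Injective g → (∀ i, g i ∈ S) →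
      κ ≤ #(↥S) := by
    intro S g hg hmem
    have hinj : Function.Injective (fun i => (⟨g i, hmem i⟩ : ↥S)) :=
      fun i j h => hg (congrArg Subtype.val h)
    rw [← hι]
    exact mk_le_of_injective hinj
  have hmed : ∀ f : Set ι, #(↥(Rf f)) = κ ∧ #(↥((Rf f)ᶜ)) = κ := by
    intro f
    obtain ⟨j₀⟩ := hιne
    have hub : ∀ S : Set X, #(↥S) ≤ κ := by
      intro S
      rw [← hX]
      exact Cardinal.mk_set_le S
    constructor
    · refine le_antisymm (hub _) ?_
      by_cases hj : j₀ ∈ f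
      · exact hκle _ _ (hinjl j₀) (fun i => (hmeminl f i j₀).mpr hj)
      · exact hκle _ _ (hinjr j₀) (fun i => (hmeminr f i j₀).mpr hj)
    · refine le_antisymm (hub _) ?_
      by_cases hj : j₀ ∈ f
      · exact hκle _ _ (hinjr j₀) (fun i hmem => ((hmeminr f i j₀).mp hmem) hj)
      · exact hκle _ _ (hinjl j₀) (fun i hmem => hj ((hmeminl f i j₀).mp hmem))
  have key := fun f : Set ι =>
    CutsetAux.exists_near κ hκ C hcut huniv hempty (Rf f) (hmed f).1 (hmed f).2
  choose Efun hEC hE1 hE2 using key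
  have hcross : ∀ f g : Set ι, f ≠ g → ¬ Efun f ⊆ Efun g := by
    intro f g hfg hsub
    have hj : ∃ j₀, (j₀ ∈ f ∧ j₀ ∉ g) ∨ (j₀ ∈ g ∧ j₀ ∉ f) := by
      by_contra h
      push_neg at h
      apply hfg
      ext j
      exact ⟨(h j).1, (h j).2⟩
    obtain ⟨j₀, hj⟩ := hj
    have hge : κ ≤ #(↥(Rf f \ Rf g)) := by
      rcases hj with ⟨h1, h2⟩ | ⟨h1, h2⟩
      · refine hκle _ _ (hinjl j₀) fun i => ?_
        exact ⟨(hmeminl f i j₀).mpr h1, fun hmem => h2 ((hmeminl g i j₀).mp hmem)⟩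
      · refine hκle _ _ (hinjr j₀) fun i => ?_
        exact ⟨(hmeminr f i j₀).mpr h2, fun hmem => ((hmeminr g i j₀).mp hmem) h1⟩
    have hsubd : (Rf f \ Rf g) ⊆ (Rf f \ Efun f) ∪ (Efun g \ Rf g) := by
      intro x hx
      by_cases hxe : x ∈ Efun f
      · exact Or.inr ⟨hsub hxe, hx.2⟩
      · exact Or.inl ⟨hx.1, hxe⟩
    have hlt : #(↥((Rf f \ Efun f) ∪ (Efun g \ Rf g))) < κ :=
      lt_of_le_of_lt (Cardinal.mk_union_le _ _)
        (Cardinal.add_lt_of_lt hκ (hE2 f) (hE1 g))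
    exact absurd (hge.trans (Cardinal.mk_le_mk_of_subset hsubd)) (not_le.mpr hlt)
  have hEinj : Function.Injective Efun := by
    intro f g h
    by_contra hne
    exact hcross f g hne (h ▸ subset_rfl)
  refine ⟨Set.range Efun, ?_, ?_, ?_⟩
  · rintro E ⟨f, rfl⟩
    exact hEC f
  · rintro E ⟨f, rfl⟩ E' ⟨g, rfl⟩ hne
    exact hcross f g (fun h => hne (congrArg Efun h))
  · rw [Cardinal.mk_range_eq _ hEinj, Cardinal.mk_set, hι]
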